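/- Let M₂ solve M₂' = 2[G(M₁)M₁ - M₂ + σ] where M₁(t) is a solution of M₁' = G(M₁) - M₁ converging to L ∈ {-1, 0, 1} as t → ∞, and G(L) = L. Then M₂(t) converges to L² + σ as t → ∞; in particular the variance M₂ - M₁² converges to σ. -/

import Mathlib

open Real MeasureTheory Filter Topology

private lemma aux_deriv (M2 : ℝ → ℝ) (d a : ℝ) (t : ℝ) (h : HasDerivAt M2 d t) :
    HasDerivAt (fun s => (M2 s - a) * Real.exp (2*s))
      (Real.exp (2*t) * (d + 2*(M2 t - a))) t := by
  have := (h.sub_const a).mul (((hasDerivAt_id t).const_mul 2).exp)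
  refine this.congr_deriv ?_
  simp only [id]
  ring

private lemma aux_conv (c : ℝ) (f M2 : ℝ → ℝ)
    (h2 : ∀ t, 0 ≤ t → HasDerivAt M2 (2*(f t - M2 t)) t)
    (hf : Tendsto f atTop (𝓝 c)) : Tendsto M2 atTop (𝓝 c) := by
  rw [Metric.tendsto_nhds]
  intro ε hε
  set δ := ε/3 with hδdef
  have hδpos : 0 < δ := by positivity
  obtain ⟨T₀, hT₀⟩ := eventually_atTop.1 (Metric.tendsto_nhds.1 hf δ hδpos)
  set T := max T₀ 0 with hT
  have hTnn : (0:ℝ) ≤ T := le_max_right _ _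
  have hTT₀ : T₀ ≤ T := le_max_left _ _
  -- two auxiliary monotone functions
  have key : ∀ a : ℝ, ∀ x ∈ Set.Ici T,
      HasDerivAt (fun s => (M2 s - a) * Real.exp (2*s))
        (Real.exp (2*x) * (2*(f x - M2 x) + 2*(M2 x - a))) x := by
    intro a x hx
    exact aux_deriv M2 _ a x (h2 x (le_trans hTnn hx))
  have hint : interior (Set.Ici T) = Set.Ioi T := interior_Ici
  -- upper bound: u antitone
  have hanti : AntitoneOn (fun s => (M2 s - (c + δ)) * Real.exp (2*s)) (Set.Ici T) := by
    apply antitoneOn_of_deriv_nonpos (convex_Ici T)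
    · intro x hx
      exact ((key (c+δ) x hx).continuousAt).continuousWithinAt
    · intro x hx
      rw [hint] at hx
      exact ((key (c+δ) x (Set.Ioi_subset_Ici_self hx)).differentiableAt).differentiableWithinAt
    · intro x hx
      rw [hint] at hx
      rw [(key (c+δ) x (Set.Ioi_subset_Ici_self hx)).deriv]
      have hfx : dist (f x) c < δ := hT₀ x (le_trans hTT₀ (le_of_lt hx))
      rw [Real.dist_eq, abs_lt] at hfx
      nlinarith [Real.exp_pos (2*x)]
  -- lower bound: v monotone
  have hmono : MonotoneOn (fun s => (M2 s - (c - δ)) * Real.exp (2*s)) (Set.Ici T) := by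
    apply monotoneOn_of_deriv_nonneg (convex_Ici T)
    · intro x hx
      exact ((key (c-δ) x hx).continuousAt).continuousWithinAt
    · intro x hx
      rw [hint] at hx
      exact ((key (c-δ) x (Set.Ioi_subset_Ici_self hx)).differentiableAt).differentiableWithinAt
    · intro x hx
      rw [hint] at hx
      rw [(key (c-δ) x (Set.Ioi_subset_Ici_self hx)).deriv]
      have hfx : dist (f x) c < δ := hT₀ x (le_trans hTT₀ (le_of_lt hx))
      rw [Real.dist_eq, abs_lt] at hfx
      nlinarith [Real.exp_pos (2*x)]
  set K₁ := (M2 T - (c + δ)) * Real.exp (2*T) with hK₁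
  set K₂ := (M2 T - (c - δ)) * Real.exp (2*T) with hK₂
  have hexp : Tendsto (fun t : ℝ => δ * Real.exp (2*t)) atTop atTop := by
    apply Tendsto.const_mul_atTop hδpos
    exact Real.tendsto_exp_atTop.comp (tendsto_id.const_mul_atTop two_pos)
  have hev1 : ∀ᶠ t in atTop, K₁ ≤ δ * Real.exp (2*t) := hexp.eventually_ge_atTop K₁
  have hev2 : ∀ᶠ t in atTop, -(δ * Real.exp (2*t)) ≤ K₂ := by
    have := hexp.eventually_ge_atTop (-K₂)
    filter_upwards [this] with t ht
    linarith
  filter_upwards [hev1, hev2, eventually_ge_atTop T] with t h₁ h₂ hTt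
  have hept : 0 < Real.exp (2*t) := Real.exp_pos _
  have hup : (M2 t - (c + δ)) * Real.exp (2*t) ≤ K₁ :=
    hanti (Set.mem_Ici.2 le_rfl) hTt hTt
  have hlo : K₂ ≤ (M2 t - (c - δ)) * Real.exp (2*t) :=
    hmono (Set.mem_Ici.2 le_rfl) hTt hTt
  have hub : M2 t - c ≤ 2*δ := by nlinarith
  have hlb : -(2*δ) ≤ M2 t - c := by nlinarith
  rw [Real.dist_eq, abs_lt]
  constructor <;> [linarith; linarith]

/-- The second moment converges to L² + σ, hence the variance converges to σ. -/
theorem stmt3 (σ : ℝ) (hσ : 0 < σ) (G : ℝ → ℝ) (hGc : Continuous G)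
    (hGb : ∃ Bd : ℝ, ∀ u, |G u| ≤ Bd)
    (hGm1 : G (-1) = -1) (hG0 : G 0 = 0) (hG1 : G 1 = 1)
    (L : ℝ) (hL : L = -1 ∨ L = 0 ∨ L = 1) (hGL : G L = L)
    (M1 M2 : ℝ → ℝ)
    (h1 : ∀ t, 0 ≤ t → HasDerivAt M1 (G (M1 t) - M1 t) t)
    (h2 : ∀ t, 0 ≤ t → HasDerivAt M2 (2 * (G (M1 t) * M1 t - M2 t + σ)) t)
    (hconv : Tendsto M1 atTop (𝓝 L)) :
    Tendsto M2 atTop (𝓝 (L^2 + σ)) ∧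
    Tendsto (fun t => M2 t - (M1 t)^2) atTop (𝓝 σ) := by
  have hGM1 : Tendsto (fun t => G (M1 t)) atTop (𝓝 L) := by
    have := (hGc.continuousAt (x := L)).tendsto.comp hconv
    rwa [hGL] at this
  have hf : Tendsto (fun t => G (M1 t) * M1 t + σ) atTop (𝓝 (L^2 + σ)) := by
    have := (hGM1.mul hconv).add_const σ
    rwa [← sq] at this
  have hmain : Tendsto M2 atTop (𝓝 (L^2 + σ)) := by
    apply aux_conv (L^2 + σ) (fun t => G (M1 t) * M1 t + σ) M2 _ hf
    intro t ht
    have := h2 t ht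
    convert this using 1
    ring
  refine ⟨hmain, ?_⟩
  have := hmain.sub (hconv.pow 2)
  simpa using this
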